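/- The identity F(1/6, 1/2, 7/6; 1-x) = (1/√(4x-3)) · F(1/6, 1/2, 7/6; 1 - x(9-8x)²/(4x-3)³) holds for all real x in a neighborhood of 1, where the square root satisfies √(4x-3) = 1 at x = 1. -/

import Mathlib

open Real Filter

/-- Gauss hypergeometric series F(a,b,c;x). -/
noncomputable def hypergeom (a b c x : ℝ) : ℝ :=
  ∑' n : ℕ, ((ascPochhammer ℝ n).eval a * (ascPochhammer ℝ n).eval b) /
    ((ascPochhammer ℝ n).eval c * (n.factorial : ℝ)) * x ^ n

namespace HCT

noncomputable def a (n : ℕ) : ℝ := (ascPochhammer ℝ n).eval (1/2 : ℝ) / n.factorial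

lemma poch_pos {x : ℝ} (hx : 0 < x) (n : ℕ) : 0 < (ascPochhammer ℝ n).eval x := by
  induction n with
  | zero => simp
  | succ n ih =>
    rw [ascPochhammer_succ_eval]
    positivity

lemma a_zero : a 0 = 1 := by simp [a]

lemma a_succ (n : ℕ) : a (n + 1) = a n * ((n : ℝ) + 1/2) / ((n : ℝ) + 1) := by
  have h1 : ((n+1).factorial : ℝ) = (n.factorial : ℝ) * ((n:ℝ)+1) := by
    push_cast [Nat.factorial_succ]; ring
  have h2 : (n.factorial : ℝ) ≠ 0 := by positivity
  rw [a, a, ascPochhammer_succ_eval, h1]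
  field_simp
  ring

lemma a_pos (n : ℕ) : 0 < a n := by
  have := poch_pos (x := (1/2 : ℝ)) (by norm_num) n
  have : (0:ℝ) < (n.factorial : ℝ) := by positivity
  exact div_pos (poch_pos (by norm_num) n) this

lemma a_le_one (n : ℕ) : a n ≤ 1 := by
  induction n with
  | zero => simp [a_zero]
  | succ n ih =>
    rw [a_succ]
    have h1 : ((n:ℝ) + 1/2) / ((n:ℝ)+1) ≤ 1 := by
      rw [div_le_one (by positivity)]; linarith
    calc a n * ((n : ℝ) + 1/2) / ((n : ℝ) + 1) = a n * (((n : ℝ) + 1/2) / ((n : ℝ) + 1)) := by ring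
    _ ≤ 1 * 1 := by
        apply mul_le_mul ih h1 (by positivity) (by norm_num)
    _ = 1 := by norm_num

lemma poch16 (n : ℕ) : (ascPochhammer ℝ n).eval (7/6 : ℝ) =
    (ascPochhammer ℝ n).eval (1/6 : ℝ) * (6*(n:ℝ)+1) := by
  induction n with
  | zero => simp
  | succ n ih =>
    rw [ascPochhammer_succ_eval, ascPochhammer_succ_eval, ih]
    push_cast
    ring

/-- the binomial series ∑ aₙ wⁿ, summing to (1-w)^{-1/2}. -/
noncomputable def S (w : ℝ) : ℝ := ∑' n : ℕ, a n * w ^ n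

lemma summable_poly_geom (k : ℕ) {r : ℝ} (hr : |r| < 1) :
    Summable (fun n : ℕ => ((n:ℝ)+1)^k * r ^ n) := by
  have h := summable_pow_mul_geometric_of_norm_lt_one (R := ℝ) (r := r) k (by simpa using hr)
  have h2 := summable_pow_mul_geometric_of_norm_lt_one (R := ℝ) (r := r) 0 (by simpa using hr)
  -- ((n+1))^k * r^n : binomial expand; just bound |...| ≤ (2n)^k |r|^n for n ≥ 1 ... easier: shift
  have h3 := (summable_pow_mul_geometric_of_norm_lt_one (R := ℝ) (r := r) k
    (by simpa using hr)).mul_left r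
  have h4 : Summable (fun n : ℕ => ((n+1:ℕ):ℝ)^k * r ^ (n+1)) := by
    simpa using (summable_nat_add_iff 1).2 h
  have h5 : Summable (fun n : ℕ => ((n:ℝ)+1)^k * r ^ (n+1)) := by
    simpa [Nat.cast_add] using h4
  rcases eq_or_ne r 0 with rfl | hr0
  · apply summable_of_ne_finset_zero (s := {0}); intro n hn
    have : n ≠ 0 := by simpa using hn
    simp [zero_pow this]
  · have := h5.mul_left r⁻¹
    apply this.congr
    intro n
    field_simp
    ring

lemma summable_S {w : ℝ} (hw : |w| < 1) : Summable (fun n : ℕ => a n * w ^ n) := by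
  apply Summable.of_norm
  apply Summable.of_nonneg_of_le (fun n => norm_nonneg _) (fun n => ?_)
    (summable_geometric_of_lt_one (abs_nonneg w) hw)
  rw [norm_mul, norm_pow]
  calc ‖a n‖ * ‖w‖ ^ n ≤ 1 * |w| ^ n := by
        apply mul_le_mul_of_nonneg_right _ (by positivity)
        rw [Real.norm_eq_abs, abs_of_pos (a_pos n)]; exact a_le_one n
  _ = |w| ^ n := by ring

lemma abs_a (n : ℕ) : |a n| = a n := abs_of_pos (a_pos n)

noncomputable def D (w : ℝ) : ℝ := ∑' n : ℕ, ((n:ℝ) + 1/2) * a n * w ^ n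

lemma summable_u {r : ℝ} (hr : |r| < 1) :
    Summable (fun n : ℕ => (n:ℝ) * r ^ (n-1)) := by
  rw [← summable_nat_add_iff 1]
  simpa [pow_one] using summable_poly_geom 1 hr

lemma summable_D {w : ℝ} (hw : |w| < 1) :
    Summable (fun n : ℕ => ((n:ℝ) + 1/2) * a n * w ^ n) := by
  apply Summable.of_norm
  apply Summable.of_nonneg_of_le (fun n => norm_nonneg _) (fun n => ?_)
    (summable_poly_geom 1 (r := |w|) (by rwa [abs_abs]))
  rw [Real.norm_eq_abs, abs_mul, abs_mul, abs_a, abs_pow, abs_of_nonneg (by positivity :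
    (0:ℝ) ≤ (n:ℝ)+1/2), pow_one]
  have h2 : a n * |w|^n ≤ 1 * |w|^n :=
    mul_le_mul_of_nonneg_right (a_le_one n) (by positivity)
  nlinarith [pow_nonneg (abs_nonneg w) n, (a_pos n).le]

lemma a_mul_bound {n : ℕ} {y r : ℝ} (hy : |y| ≤ r) :
    ‖a n * ((n:ℝ) * y ^ (n-1))‖ ≤ (n:ℝ) * r ^ (n-1) := by
  have hr0 : 0 ≤ r := le_trans (abs_nonneg y) hy
  rw [Real.norm_eq_abs, abs_mul, abs_a, abs_mul, abs_pow,
    abs_of_nonneg (by positivity : (0:ℝ) ≤ (n:ℝ))]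
  have h1 : |y|^(n-1) ≤ r^(n-1) := pow_le_pow_left₀ (abs_nonneg y) hy _
  have h2 : a n * ((n:ℝ) * |y|^(n-1)) ≤ 1 * ((n:ℝ) * |y|^(n-1)) :=
    mul_le_mul_of_nonneg_right (a_le_one n) (by positivity)
  nlinarith [(a_pos n).le, pow_nonneg (abs_nonneg y) (n-1)]

lemma summable_D' {w : ℝ} (hw : |w| < 1) :
    Summable (fun n : ℕ => a n * ((n:ℝ) * w ^ (n-1))) :=
  Summable.of_norm <| Summable.of_nonneg_of_le (fun n => norm_nonneg _)
    (fun n => a_mul_bound le_rfl) (summable_u (r := |w|) (by rwa [abs_abs]))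

lemma tsum_D' {w : ℝ} (hw : |w| < 1) :
    ∑' n : ℕ, a n * ((n:ℝ) * w ^ (n-1)) = D w := by
  rw [Summable.tsum_eq_zero_add (summable_D' hw)]
  have h0 : a 0 * ((↑(0:ℕ):ℝ) * w ^ ((0:ℕ)-1)) = 0 := by simp
  rw [h0, zero_add, D]
  apply tsum_congr
  intro n
  have h1 : a (n+1) * ((n:ℝ)+1) = a n * ((n:ℝ) + 1/2) := by
    rw [a_succ, div_mul_cancel₀]
    positivity
  have hidx : (n + 1 - 1 : ℕ) = n := rfl
  rw [hidx]
  calc a (n+1) * ((↑(n+1):ℝ) * w ^ n) = (a (n+1) * ((n:ℝ)+1)) * w ^ n := by push_cast; ring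
  _ = (a n * ((n:ℝ) + 1/2)) * w ^ n := by rw [h1]
  _ = ((n:ℝ) + 1/2) * a n * w ^ n := by ring

lemma S_hasDerivAt {w : ℝ} (hw : |w| < 1) : HasDerivAt S (D w) w := by
  set r : ℝ := (1 + |w|)/2 with hr
  have hr1 : |r| < 1 := by
    rw [abs_of_nonneg (by positivity)]
    simp only [hr]; linarith
  have hwr : |w| < r := by simp only [hr]; linarith
  have key : HasDerivAt (fun z => ∑' n : ℕ, a n * z ^ n)
      (∑' n : ℕ, a n * ((n:ℝ) * w ^ (n-1))) w := by
    apply hasDerivAt_tsum_of_isPreconnected (summable_u hr1) isOpen_Ioo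
      (convex_Ioo (-r) r).isPreconnected
      (g := fun n y => a n * y ^ n) (g' := fun n y => a n * ((n:ℝ) * y ^ (n-1)))
      (y₀ := w) (y := w)
    · intro n y _
      exact (hasDerivAt_pow n y).const_mul (a n)
    · intro n y hy
      exact a_mul_bound (le_of_lt (abs_lt.2 ⟨by linarith [hy.1], by linarith [hy.2]⟩))
    · exact abs_lt.1 hwr |>.imp (fun h => h) (fun h => h) |> fun ⟨h1, h2⟩ => ⟨h1, h2⟩
    · exact summable_S hw
    · exact abs_lt.1 hwr
  rw [tsum_D' hw] at key
  exact key

lemma S_zero : S 0 = 1 := by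
  rw [S, tsum_eq_single 0]
  · simp [a_zero]
  · intro n hn
    simp [zero_pow hn]

lemma two_mul_D {w : ℝ} (hw : |w| < 1) : 2 * (1 - w) * D w = S w := by
  have s1 : Summable (fun n : ℕ => (2*(n:ℝ) + 1) * a n * w ^ n) := by
    have := (summable_D hw).mul_left 2
    apply this.congr; intro n; ring
  have s2 : Summable (fun n : ℕ => (2*(n:ℝ)) * a n * w ^ n) := by
    apply Summable.of_norm
    apply Summable.of_nonneg_of_le (fun n => norm_nonneg _) (fun n => ?_)
      ((summable_poly_geom 1 (r := |w|) (by rwa [abs_abs])).mul_left 2)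
    rw [Real.norm_eq_abs, abs_mul, abs_mul, abs_a, abs_pow,
      abs_of_nonneg (by positivity : (0:ℝ) ≤ 2*(n:ℝ))]
    rw [pow_one]
    have h2 : a n * |w|^n ≤ 1 * |w|^n :=
      mul_le_mul_of_nonneg_right (a_le_one n) (by positivity)
    nlinarith [pow_nonneg (abs_nonneg w) n, (a_pos n).le]
  have e2 : 2 * w * D w = ∑' n : ℕ, (2*(n:ℝ)) * a n * w ^ n := by
    rw [D, ← tsum_mul_left, Summable.tsum_eq_zero_add s2]
    have h0 : 2*((↑(0:ℕ)):ℝ) * a 0 * w ^ (0:ℕ) = 0 := by simp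
    rw [h0, zero_add]
    apply tsum_congr
    intro n
    have h1 : a (n+1) * ((n:ℝ)+1) = a n * ((n:ℝ) + 1/2) := by
      rw [a_succ, div_mul_cancel₀]
      positivity
    calc 2 * w * (((n:ℝ) + 1/2) * a n * w ^ n) = 2 * (a n * ((n:ℝ)+1/2)) * w ^ (n+1) := by ring
    _ = 2 * (a (n+1) * ((n:ℝ)+1)) * w ^ (n+1) := by rw [h1]
    _ = 2*((↑(n+1):ℝ)) * a (n+1) * w ^ (n+1) := by push_cast; ring
  have e1 : 2 * D w = ∑' n : ℕ, (2*(n:ℝ) + 1) * a n * w ^ n := by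
    rw [D, ← tsum_mul_left]
    apply tsum_congr; intro n; ring
  have e3 : 2 * (1-w) * D w = 2 * D w - 2 * w * D w := by ring
  rw [e3, e1, e2, ← Summable.tsum_sub s1 s2]
  apply tsum_congr; intro n; ring

lemma S_sq {w : ℝ} (hw : |w| < 1) : S w ^ 2 * (1 - w) = 1 := by
  set f : ℝ → ℝ := fun y => S y ^ 2 * (1 - y) with hf
  have hderiv : ∀ y : ℝ, |y| < 1 → HasDerivAt f 0 y := by
    intro y hy
    have h1 := S_hasDerivAt hy
    have h2 : HasDerivAt f (2 * S y * D y * (1 - y) + S y ^ 2 * (-1)) y := by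
      have := ((h1.pow 2).mul ((hasDerivAt_id y).const_sub 1))
      exact this.congr_deriv (by simp only [id_eq, Pi.pow_apply]; ring)
    have h3 : 2 * S y * D y * (1 - y) + S y ^ 2 * (-1) = 0 := by
      have h4 : 2 * S y * D y * (1 - y) = S y * (2 * (1 - y) * D y) := by ring
      rw [h4, two_mul_D hy]
      ring
    rwa [h3] at h2
  set lo := min 0 w with hlo
  set hi := max 0 w with hhi
  have habs : ∀ y ∈ Set.Icc lo hi, |y| < 1 := by
    intro y hy
    rw [abs_lt]
    constructor
    · have : -1 < lo := by
        apply lt_min (by norm_num) (by linarith [abs_lt.1 hw |>.1])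
      linarith [hy.1]
    · have : hi < 1 := by
        apply max_lt (by norm_num) (by linarith [abs_lt.1 hw |>.2])
      linarith [hy.2]
  have hconst := constant_of_has_deriv_right_zero (f := f) (a := lo) (b := hi)
    (fun y hy => ((hderiv y (habs y hy)).continuousAt).continuousWithinAt)
    (fun y hy => ((hderiv y (habs y (Set.Ico_subset_Icc_self hy))).hasDerivWithinAt))
  have h0 : f 0 = f lo := hconst 0 ⟨min_le_left _ _, le_max_left _ _⟩
  have hw' : f w = f lo := hconst w ⟨min_le_right _ _, le_max_right _ _⟩
  have : f w = f 0 := by rw [hw', h0]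
  rw [hf] at this
  simp only at this
  rw [this, S_zero]
  norm_num

lemma S_pos {w : ℝ} (hw : |w| < 1) : 0 < S w := by
  by_contra h
  push_neg at h
  have hne : S w ≠ 0 := by
    intro h0
    have := S_sq hw
    rw [h0] at this
    norm_num at this
  have hneg : S w < 0 := lt_of_le_of_ne h hne
  have hcont : ContinuousOn S (Set.uIcc 0 w) := by
    intro y hy
    have : |y| < 1 := by
      rcases Set.mem_uIcc.1 hy with ⟨h1, h2⟩ | ⟨h1, h2⟩
      · rw [abs_lt]; exact ⟨by linarith [abs_lt.1 hw |>.1], by linarith [abs_lt.1 hw |>.2]⟩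
      · rw [abs_lt]; exact ⟨by linarith [abs_lt.1 hw |>.1], by linarith [abs_lt.1 hw |>.2]⟩
    exact (S_hasDerivAt this).continuousAt.continuousWithinAt
  have hmem : (0:ℝ) ∈ Set.uIcc (S 0) (S w) := by
    rw [S_zero, Set.mem_uIcc]
    right
    exact ⟨hneg.le, by norm_num⟩
  obtain ⟨c, hc, hc0⟩ := intermediate_value_uIcc hcont hmem
  have hcabs : |c| < 1 := by
    rcases Set.mem_uIcc.1 hc with ⟨h1, h2⟩ | ⟨h1, h2⟩
    · rw [abs_lt]; exact ⟨by linarith [abs_lt.1 hw |>.1], by linarith [abs_lt.1 hw |>.2]⟩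
    · rw [abs_lt]; exact ⟨by linarith [abs_lt.1 hw |>.1], by linarith [abs_lt.1 hw |>.2]⟩
  have := S_sq hcabs
  rw [hc0] at this
  norm_num at this

lemma S_eq {w : ℝ} (hw : |w| < 1) : S w = 1 / Real.sqrt (1 - w) := by
  have h1 : (0:ℝ) < 1 - w := by linarith [abs_lt.1 hw |>.2]
  have h2 : S w ^ 2 = 1 / (1 - w) := by
    have := S_sq hw
    field_simp
    linarith [this]
  have h3 : S w = Real.sqrt (S w ^ 2) := (Real.sqrt_sq (S_pos hw).le).symm
  rw [h3, h2, one_div, Real.sqrt_inv, one_div]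

lemma coef_eq (n : ℕ) :
    ((ascPochhammer ℝ n).eval (1/6:ℝ) * (ascPochhammer ℝ n).eval (1/2:ℝ)) /
      ((ascPochhammer ℝ n).eval (7/6:ℝ) * (n.factorial : ℝ)) = a n / (6*(n:ℝ)+1) := by
  rw [poch16, a]
  have h1 : (ascPochhammer ℝ n).eval (1/6:ℝ) ≠ 0 := (poch_pos (by norm_num) n).ne'
  have h2 : (n.factorial : ℝ) ≠ 0 := by positivity
  have h3 : (6*(n:ℝ)+1) ≠ 0 := by positivity
  field_simp

lemma hyper_eq_integral {z : ℝ} (hz : |z| < 1) :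
    hypergeom (1/6) (1/2) (7/6) z = ∫ s in (0:ℝ)..1, S (z * s^6) := by
  set f : ℕ → C(ℝ, ℝ) := fun n =>
    ⟨fun s => a n * (z * s^6)^n,
      continuous_const.mul ((continuous_const.mul (continuous_pow 6)).pow n)⟩ with hf
  have hf_sum : Summable fun n : ℕ =>
      ‖(f n).restrict (⟨Set.uIcc (0:ℝ) 1, isCompact_uIcc⟩ : TopologicalSpace.Compacts ℝ)‖ := by
    apply Summable.of_nonneg_of_le (fun n => norm_nonneg _) (fun n => ?_)
      (summable_geometric_of_lt_one (abs_nonneg z) hz)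
    rw [ContinuousMap.norm_le _ (by positivity)]
    rintro ⟨x, hx⟩
    have hx' : x ∈ Set.Icc (0:ℝ) 1 := by
      have : x ∈ Set.uIcc (0:ℝ) 1 := hx
      rwa [Set.uIcc_of_le (by norm_num : (0:ℝ) ≤ 1)] at this
    simp only [ContinuousMap.restrict_apply, hf, ContinuousMap.coe_mk]
    rw [Real.norm_eq_abs, abs_mul, abs_a, abs_pow, abs_mul, abs_pow]
    have h1 : |x| ≤ 1 := by rw [abs_of_nonneg hx'.1]; exact hx'.2
    have h2 : |x|^6 ≤ 1 := pow_le_one₀ (abs_nonneg x) h1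
    have h3 : (|z| * |x|^6)^n ≤ |z|^n := by
      apply pow_le_pow_left₀ (by positivity)
      nlinarith [abs_nonneg z]
    calc a n * (|z| * |x|^6)^n ≤ 1 * |z|^n := by
          apply mul_le_mul (a_le_one n) h3 (by positivity) (by norm_num)
    _ = |z|^n := by ring
  have key := intervalIntegral.tsum_intervalIntegral_eq_of_summable_norm (a := (0:ℝ)) (b := 1) hf_sum
  have e1 : ∀ x : ℝ, ∑' n : ℕ, (f n) x = S (z * x^6) := by
    intro x
    rfl
  have e2 : ∀ n : ℕ, (∫ x in (0:ℝ)..1, (f n) x) = a n / (6*(n:ℝ)+1) * z^n := by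
    intro n
    simp only [hf, ContinuousMap.coe_mk]
    have : ∀ x : ℝ, a n * (z * x^6)^n = (a n * z^n) * x^(6*n) := by
      intro x
      rw [mul_pow, ← pow_mul]
      ring
    rw [intervalIntegral.integral_congr (fun x _ => this x), intervalIntegral.integral_const_mul,
      integral_pow]
    push_cast
    field_simp
    simp
  calc hypergeom (1/6) (1/2) (7/6) z
      = ∑' n : ℕ, a n / (6*(n:ℝ)+1) * z^n := by
        rw [hypergeom]
        apply tsum_congr
        intro n
        rw [coef_eq]
  _ = ∑' n : ℕ, ∫ x in (0:ℝ)..1, (f n) x := by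
        apply tsum_congr
        intro n
        rw [e2]
  _ = ∫ x in (0:ℝ)..1, ∑' n : ℕ, (f n) x := key
  _ = ∫ x in (0:ℝ)..1, S (z * x^6) := by
        apply intervalIntegral.integral_congr
        intro x _
        exact e1 x


end HCT

namespace HCT
lemma subst_deriv {z r s : ℝ} (hr : 0 < r)
    (hQ : (0:ℝ) < 1 - 4*z*s^6) :
    HasDerivAt (fun t : ℝ => r * t / Real.sqrt (1 - 4*z*t^6))
      (r * (1 + 8*z*s^6) / ((1 - 4*z*s^6) * Real.sqrt (1 - 4*z*s^6))) s := by
  have hp : 0 < Real.sqrt (1 - 4*z*s^6) := Real.sqrt_pos.2 hQ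
  have hp2 : (Real.sqrt (1 - 4*z*s^6))^2 = 1 - 4*z*s^6 := Real.sq_sqrt hQ.le
  have hg : HasDerivAt (fun t : ℝ => 1 - 4*z*t^6) (-(24*z*s^5)) s := by
    have h1 : HasDerivAt (fun t : ℝ => t^6) (6*s^5) s := by
      simpa using hasDerivAt_pow 6 s
    have h2 := (h1.const_mul (4*z)).const_sub 1
    exact h2.congr_deriv (by ring)
  have hsq : HasDerivAt (fun t : ℝ => Real.sqrt (1 - 4*z*t^6))
      (-(24*z*s^5) / (2 * Real.sqrt (1 - 4*z*s^6))) s := by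
    have := (Real.hasDerivAt_sqrt hQ.ne').comp s hg
    exact this.congr_deriv (by ring)
  have hnum : HasDerivAt (fun t : ℝ => r * t) r s := by
    simpa using (hasDerivAt_id s).const_mul r
  have hdiv := hnum.div hsq hp.ne'
  refine hdiv.congr_deriv ?_
  symm
  rw [div_eq_div_iff (by positivity) (by positivity)]
  have hp' : √(1 - z*s^6*4) ≠ 0 := by rw [show 1 - z*s^6*4 = 1 - 4*z*s^6 by ring]; exact hp.ne'
  field_simp
  rw [show 1 - z*s^6*4 = 1 - 4*z*s^6 by ring, hp2]
  ring

end HCT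

namespace HCT2
open HCT
lemma key_sqrt {z s : ℝ} (hw1 : -(1:ℝ)/100 ≤ z*s^6) (hw2 : z*s^6 ≤ 1/100) :
    Real.sqrt ((1 - z*s^6) * (1 + 8*z*s^6)^2 / (1 - 4*z*s^6)^3) =
      Real.sqrt (1 - z*s^6) * (1 + 8*z*s^6) /
        (Real.sqrt (1 - 4*z*s^6) * (1 - 4*z*s^6)) := by
  have hm : (0:ℝ) < 1 - z*s^6 := by linarith
  have hQ : (0:ℝ) < 1 - 4*z*s^6 := by linarith
  have h8 : (0:ℝ) < 1 + 8*z*s^6 := by linarith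
  have hmq : (Real.sqrt (1 - z*s^6))^2 = 1 - z*s^6 := Real.sq_sqrt hm.le
  have hq2 : (Real.sqrt (1 - 4*z*s^6))^2 = 1 - 4*z*s^6 := Real.sq_sqrt hQ.le
  have he : (1 - z*s^6) * (1 + 8*z*s^6)^2 / (1 - 4*z*s^6)^3 =
      (Real.sqrt (1 - z*s^6) * (1 + 8*z*s^6) /
        (Real.sqrt (1 - 4*z*s^6) * (1 - 4*z*s^6)))^2 := by
    rw [div_pow, mul_pow, mul_pow, hmq, hq2]
    field_simp
  rw [he, Real.sqrt_sq (by positivity)]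

lemma key_point {z s : ℝ} (hz : |z| ≤ 1/100) (hw1 : -(1:ℝ)/100 ≤ z*s^6) (hw2 : z*s^6 ≤ 1/100) :
    1 - (-27*z/(1-4*z)^3) * (Real.sqrt (1-4*z) * s / Real.sqrt (1 - 4*z*s^6))^6 =
      (1 - z*s^6) * (1 + 8*z*s^6)^2 / (1 - 4*z*s^6)^3 := by
  have hz2 : z ≤ 1/100 := abs_le.1 hz |>.2
  have hA : (0:ℝ) < 1 - 4*z := by linarith
  have hQ : (0:ℝ) < 1 - 4*z*s^6 := by linarith
  have hA6 : (Real.sqrt (1-4*z))^6 = (1-4*z)^3 := by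
    rw [show (6:ℕ) = 2*3 from rfl, pow_mul, Real.sq_sqrt hA.le]
  have hQ6 : (Real.sqrt (1-4*z*s^6))^6 = (1-4*z*s^6)^3 := by
    rw [show (6:ℕ) = 2*3 from rfl, pow_mul, Real.sq_sqrt hQ.le]
  rw [div_pow, mul_pow, hA6, hQ6]
  have hA' : 1 - z*4 ≠ 0 := by intro h; linarith
  have hQ' : 1 - z*4*s^6 ≠ 0 := by intro h; linarith
  field_simp
  ring

end HCT2

namespace HCT3
open HCT HCT2
lemma subst_integral {z : ℝ} (hz : |z| ≤ 1/100) :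
    (∫ u in (0:ℝ)..1, 1 / Real.sqrt (1 - (-27*z/(1-4*z)^3) * u^6)) =
      Real.sqrt (1-4*z) * ∫ s in (0:ℝ)..1, 1 / Real.sqrt (1 - z * s^6) := by
  have hz1 : -1/100 ≤ z := by linarith [abs_le.1 hz |>.1]
  have hz2 : z ≤ 1/100 := abs_le.1 hz |>.2
  have hA : (0:ℝ) < 1 - 4*z := by linarith
  have hr : 0 < Real.sqrt (1-4*z) := Real.sqrt_pos.2 hA
  set r := Real.sqrt (1-4*z) with hrdef
  set z' := -27*z/(1-4*z)^3 with hz'def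
  set φ : ℝ → ℝ := fun t => r * t / Real.sqrt (1 - 4*z*t^6) with hφdef
  set φ' : ℝ → ℝ := fun s => r * (1 + 8*z*s^6) / ((1 - 4*z*s^6) * Real.sqrt (1 - 4*z*s^6))
    with hφ'def
  set g : ℝ → ℝ := fun u => 1 / Real.sqrt (1 - z' * u^6) with hgdef
  have hIcc : Set.uIcc (0:ℝ) 1 = Set.Icc 0 1 := Set.uIcc_of_le (by norm_num)
  have hw : ∀ s : ℝ, s ∈ Set.Icc (0:ℝ) 1 → -(1:ℝ)/100 ≤ z*s^6 ∧ z*s^6 ≤ 1/100 := by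
    intro s hs
    have h6 : 0 ≤ s^6 := by positivity
    have h6' : s^6 ≤ 1 := pow_le_one₀ hs.1 hs.2
    constructor <;> nlinarith
  have hQpos : ∀ s : ℝ, s ∈ Set.Icc (0:ℝ) 1 → (0:ℝ) < 1 - 4*z*s^6 := by
    intro s hs; obtain ⟨h1, h2⟩ := hw s hs; nlinarith
  -- derivative hypothesis
  have h : ∀ s ∈ Set.uIcc (0:ℝ) 1, HasDerivAt φ (φ' s) s := by
    rw [hIcc]
    intro s hs
    exact subst_deriv hr (hQpos s hs)
  -- continuity of φ'
  have h' : ContinuousOn φ' (Set.uIcc (0:ℝ) 1) := by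
    rw [hIcc, hφ'def]
    apply ContinuousOn.div
    · fun_prop
    · apply ContinuousOn.mul
      · fun_prop
      · apply Continuous.comp_continuousOn Real.continuous_sqrt
        fun_prop
    · intro s hs
      have := hQpos s hs
      have h2 : 0 < Real.sqrt (1 - 4*z*s^6) := Real.sqrt_pos.2 this
      positivity
  -- the image is in the good region
  have himg : ∀ s ∈ Set.uIcc (0:ℝ) 1, (0:ℝ) < 1 - z' * (φ s)^6 := by
    rw [hIcc]
    intro s hs
    obtain ⟨h1, h2⟩ := hw s hs
    have e := key_point hz h1 h2
    rw [hφdef]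
    simp only
    rw [hz'def, hrdef, e]
    have hQ := hQpos s hs
    have hm : (0:ℝ) < 1 - z*s^6 := by linarith
    have h8 : (0:ℝ) < 1 + 8*z*s^6 := by linarith
    positivity
  have hg : ContinuousOn g (φ '' Set.uIcc (0:ℝ) 1) := by
    have hopen : IsOpen {u : ℝ | 0 < 1 - z' * u^6} :=
      isOpen_lt continuous_const (by fun_prop)
    have hcont : ContinuousOn g {u : ℝ | 0 < 1 - z' * u^6} := by
      rw [hgdef]
      apply ContinuousOn.div continuousOn_const
      · exact Real.continuous_sqrt.comp_continuousOn (by fun_prop)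
      · intro u hu
        exact (Real.sqrt_pos.2 hu).ne'
    apply hcont.mono
    rintro u ⟨s, hs, rfl⟩
    exact himg s hs
  have main := intervalIntegral.integral_comp_smul_deriv' h h' hg
  have hφ0 : φ 0 = 0 := by
    rw [hφdef]; simp
  have hφ1 : φ 1 = 1 := by
    rw [hφdef]
    simp only [one_pow, mul_one]
    rw [div_self hr.ne']
  rw [hφ0, hφ1] at main
  rw [← main]
  -- now pointwise identity on the integrand
  have e2 : ∀ s ∈ Set.uIcc (0:ℝ) 1, φ' s • (g ∘ φ) s = r * (1 / Real.sqrt (1 - z*s^6)) := by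
    rw [hIcc]
    intro s hs
    obtain ⟨h1, h2⟩ := hw s hs
    have hQ := hQpos s hs
    have hm : (0:ℝ) < 1 - z*s^6 := by linarith
    have h8 : (0:ℝ) < 1 + 8*z*s^6 := by linarith
    have hq : 0 < Real.sqrt (1 - 4*z*s^6) := Real.sqrt_pos.2 hQ
    have hms : 0 < Real.sqrt (1 - z*s^6) := Real.sqrt_pos.2 hm
    have e := key_point hz h1 h2
    simp only [smul_eq_mul, Function.comp_apply, hgdef, hφdef, hφ'def]
    rw [hz'def, hrdef, e, key_sqrt h1 h2]
    have h8' : 1 + z*s^6*8 ≠ 0 := by intro h; linarith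
    field_simp
    exact div_self (by intro h; linarith)
  rw [intervalIntegral.integral_congr e2, intervalIntegral.integral_const_mul]

end HCT3

namespace HCT

lemma hyper_sqrt {z : ℝ} (hz : |z| < 1) :
    hypergeom (1/6) (1/2) (7/6) z = ∫ s in (0:ℝ)..1, 1 / Real.sqrt (1 - z * s^6) := by
  rw [hyper_eq_integral hz]
  apply intervalIntegral.integral_congr
  intro s hs
  rw [Set.uIcc_of_le (by norm_num : (0:ℝ) ≤ 1)] at hs
  have h6 : 0 ≤ s^6 := by positivity
  have h6' : s^6 ≤ 1 := pow_le_one₀ hs.1 hs.2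
  have habs : |z * s^6| < 1 := by
    rw [abs_mul, abs_of_nonneg h6]
    calc |z| * s^6 ≤ |z| * 1 := by
          apply mul_le_mul_of_nonneg_left h6' (abs_nonneg z)
    _ = |z| := by ring
    _ < 1 := hz
  exact S_eq habs

end HCT

/-- F(1/6,1/2,7/6;1-x) = (1/√(4x-3))·F(1/6,1/2,7/6; 1 - x(9-8x)²/(4x-3)³)
for all x in a neighborhood of 1. -/
theorem hypergeom_cubic_transform :
    ∀ᶠ x : ℝ in nhds 1,
      hypergeom (1/6) (1/2) (7/6) (1 - x) =
        (1 / Real.sqrt (4*x - 3)) *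
          hypergeom (1/6) (1/2) (7/6) (1 - x * (9 - 8*x)^2 / (4*x - 3)^3) := by
  filter_upwards [Metric.ball_mem_nhds (1:ℝ) (by norm_num : (0:ℝ) < 1/100)] with x hx
  rw [Metric.mem_ball, Real.dist_eq] at hx
  set z : ℝ := 1 - x with hzdef
  have hz : |z| ≤ 1/100 := by
    rw [hzdef, abs_sub_comm]
    exact hx.le
  have hz1 : -1/100 ≤ z := by linarith [abs_le.1 hz |>.1]
  have hz2 : z ≤ 1/100 := abs_le.1 hz |>.2
  have hA : (0:ℝ) < 1 - 4*z := by linarith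
  have hAx : (1:ℝ) - 4*z = 4*x - 3 := by rw [hzdef]; ring
  have hx43 : (0:ℝ) < 4*x - 3 := by rw [← hAx]; exact hA
  set z' : ℝ := -27*z/(1-4*z)^3 with hz'def
  have hz' : |z'| < 1 := by
    rw [hz'def, abs_div, abs_of_pos (by positivity : (0:ℝ) < (1-4*z)^3)]
    rw [div_lt_one (by positivity)]
    have h27 : |(-27)*z| = 27 * |z| := by
      rw [abs_mul]
      norm_num
    rw [h27]
    have hcube : ((96:ℝ)/100)^3 ≤ (1-4*z)^3 := by
      apply pow_le_pow_left₀ (by norm_num) (by linarith)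
    norm_num at hcube
    calc 27 * |z| ≤ 27/100 := by linarith [hz]
    _ < 13824/15625 := by norm_num
    _ ≤ (1-4*z)^3 := hcube
  have harg : 1 - x * (9 - 8*x)^2 / (4*x - 3)^3 = z' := by
    rw [hz'def, hzdef]
    have h1 : (4*x - 3) ≠ 0 := hx43.ne'
    have h2 : (1 - 4*(1-x)) ≠ 0 := by rw [show (1:ℝ) - 4*(1-x) = 4*x-3 by ring]; exact h1
    have h1' : x*4 - 3 ≠ 0 := by intro h; linarith
    field_simp
    ring
  rw [harg]
  rw [HCT.hyper_sqrt (by linarith [abs_le.1 hz |>.1, abs_le.1 hz |>.2] : |z| < 1),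
    HCT.hyper_sqrt hz', HCT3.subst_integral hz]
  rw [hAx]
  rw [← mul_assoc, one_div, inv_mul_cancel₀ (Real.sqrt_pos.2 hx43).ne', one_mul]
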